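/- For every natural number m ≥ 3, every oriented graph on m² − m + 2 vertices containing no independent set of size m and no transitive tournament on 3 vertices has at least (m² − m + 2)(2m − 3)/2 edges. -/

import Mathlib

/-- An oriented graph: no loops, at most one directed edge per pair
(asymmetry implies irreflexivity). -/
def IsOriented {V : Type*} (E : V → V → Prop) : Prop :=
  ∀ x y, E x y → ¬ E y x

/-- The graph contains an independent set of size `m`. -/
def HasIndep {V : Type*} (E : V → V → Prop) (m : ℕ) : Prop :=
  ∃ s : Finset V, s.card = m ∧ ∀ x ∈ s, ∀ y ∈ s, ¬ E x y

/-- The graph contains a transitive tournament on `n` vertices. -/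
def HasTransTour {V : Type*} (E : V → V → Prop) (n : ℕ) : Prop :=
  ∃ f : Fin n ↪ V, ∀ i j : Fin n, i < j → E (f i) (f j)

set_option linter.unusedSectionVars false
set_option maxHeartbeats 1000000 in
theorem _dummy : True := trivial

namespace S13

variable {V : Type*} [Fintype V] [DecidableEq V] (E : V → V → Prop) [DecidableRel E]

def adj (x y : V) : Prop := E x y ∨ E y x

instance : DecidableRel (adj E) := fun _ _ => inferInstanceAs (Decidable (_ ∨ _))

def nbr (v : V) : Finset V := Finset.univ.filter (fun u => adj E v u)
def outN (v : V) : Finset V := Finset.univ.filter (fun u => E v u)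
def inN (v : V) : Finset V := Finset.univ.filter (fun u => E u v)
def nonN (v : V) : Finset V := Finset.univ.filter (fun u => u ≠ v ∧ ¬ adj E v u)
def deg (v : V) : ℕ := (nbr E v).card

variable {E}

lemma adj_symm {x y : V} (h : adj E x y) : adj E y x := h.elim Or.inr Or.inl

section oriented
variable (hor : IsOriented E)
include hor

lemma irrefl (x : V) : ¬ E x x := fun h => hor x x h h

lemma nbr_eq_union (v : V) : nbr E v = outN E v ∪ inN E v := by
  ext u; simp only [nbr, outN, inN, Finset.mem_union, Finset.mem_filter, Finset.mem_univ, true_and]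
  exact Iff.rfl

lemma out_in_disj (v : V) : Disjoint (outN E v) (inN E v) := by
  rw [Finset.disjoint_left]
  intro a ha hb
  simp only [outN, inN, Finset.mem_filter] at ha hb
  exact hor _ _ ha.2 hb.2

lemma deg_eq (v : V) : deg E v = (outN E v).card + (inN E v).card := by
  rw [deg, nbr_eq_union hor, Finset.card_union_of_disjoint (out_in_disj hor v)]

lemma partition (v : V) : Fintype.card V = 1 + deg E v + (nonN E v).card := by
  classical
  have hv : v ∉ nbr E v ∪ nonN E v := by
    simp only [nbr, nonN, Finset.mem_union, Finset.mem_filter, Finset.mem_univ, true_and]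
    rintro (h | h)
    · exact h.elim (irrefl hor v) (irrefl hor v)
    · exact h.1 rfl
  have hdisj : Disjoint (nbr E v) (nonN E v) := by
    rw [Finset.disjoint_left]
    intro a ha hb
    simp only [nbr, Finset.mem_filter] at ha
    simp only [nonN, Finset.mem_filter] at hb
    exact hb.2.2 ha.2
  have huniv : (Finset.univ : Finset V) = insert v (nbr E v ∪ nonN E v) := by
    ext u
    simp only [Finset.mem_univ, true_iff, Finset.mem_insert, Finset.mem_union,
      nbr, nonN, Finset.mem_filter, Finset.mem_univ, true_and]
    by_cases h1 : u = v
    · exact Or.inl h1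
    · by_cases h2 : adj E v u
      · exact Or.inr (Or.inl h2)
      · exact Or.inr (Or.inr ⟨h1, h2⟩)
  rw [← Finset.card_univ, huniv, Finset.card_insert_of_notMem hv,
    Finset.card_union_of_disjoint hdisj]
  simp [deg]
  omega
end oriented

section notri
variable (hor : IsOriented E) (hno : ¬ ∃ a b c : V, E a b ∧ E b c ∧ E a c)
include hno

/-- key orientation lemma: if `E a b` and `c` is adjacent to both, the triangle is cyclic. -/
lemma triangle {a b c : V} (hab : E a b) (h1 : adj E b c) (h2 : adj E a c) :
    E b c ∧ E c a := by
  rcases h1 with h1 | h1 <;> rcases h2 with h2 | h2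
  · exact absurd ⟨a, b, c, hab, h1, h2⟩ hno
  · exact ⟨h1, h2⟩
  · exact absurd ⟨a, c, b, h2, h1, hab⟩ hno
  · exact absurd ⟨c, a, b, h2, hab, h1⟩ hno

include hor

/-- no 4 pairwise adjacent vertices -/
lemma no4 {a b c d : V} (hab : E a b)
    (hac : adj E a c) (had : adj E a d) (hbc : adj E b c) (hbd : adj E b d)
    (hcd : adj E c d) : False := by
  obtain ⟨hbc', hca⟩ := triangle hno hab hbc hac
  obtain ⟨hbd', hda⟩ := triangle hno hab hbd had
  obtain ⟨-, hdb⟩ := triangle hno hbc' hcd (Or.inl hbd')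
  exact hor _ _ hbd' hdb

/-- a pairwise adjacent finset has at most 3 elements -/
lemma tourn_le3 (t : Finset V) (h : ∀ x ∈ t, ∀ y ∈ t, x ≠ y → adj E x y) :
    t.card ≤ 3 := by
  by_contra hc
  push_neg at hc
  obtain ⟨s, hst, hs4⟩ := Finset.exists_subset_card_eq (Nat.succ_le_of_lt hc)
  obtain ⟨a, ha⟩ : ∃ a, a ∈ s := Finset.card_pos.mp (by omega : 0 < s.card)
  have h3 : (s.erase a).card = 3 := by rw [Finset.card_erase_of_mem ha, hs4]
  obtain ⟨b, c, d, hbc, hbd, hcd, habc⟩ := Finset.card_eq_three.mp h3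
  have hb : b ∈ s.erase a := by rw [habc]; simp
  have hc' : c ∈ s.erase a := by rw [habc]; simp
  have hd : d ∈ s.erase a := by rw [habc]; simp
  have hmem : ∀ x ∈ s.erase a, x ∈ t := fun x hx => hst (Finset.mem_of_mem_erase hx)
  have hat : a ∈ t := hst ha
  have hab : adj E a b := h a hat b (hmem b hb) (Ne.symm (Finset.ne_of_mem_erase hb))
  rcases hab with hab | hab
  · exact no4 hor hno hab
      (h a hat c (hmem c hc') (Ne.symm (Finset.ne_of_mem_erase hc')))
      (h a hat d (hmem d hd) (Ne.symm (Finset.ne_of_mem_erase hd)))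
      (h b (hmem b hb) c (hmem c hc') hbc)
      (h b (hmem b hb) d (hmem d hd) hbd)
      (h c (hmem c hc') d (hmem d hd) hcd)
  · exact no4 hor hno hab
      (h b (hmem b hb) c (hmem c hc') hbc)
      (h b (hmem b hb) d (hmem d hd) hbd)
      (h a hat c (hmem c hc') (Ne.symm (Finset.ne_of_mem_erase hc')))
      (h a hat d (hmem d hd) (Ne.symm (Finset.ne_of_mem_erase hd)))
      (h c (hmem c hc') d (hmem d hd) hcd)

/-- three pairwise-adjacent vertices all adjacent to a common vertex: impossible -/
lemma no_common3 {u s1 s2 s3 : V} (h12 : adj E s1 s2) (h13 : adj E s1 s3)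
    (h23 : adj E s2 s3) (hu1 : adj E s1 u) (hu2 : adj E s2 u) (hu3 : adj E s3 u) :
    False := by
  rcases h12 with h | h
  · exact no4 hor hno h h13 hu1 h23 hu2 hu3
  · exact no4 hor hno h h23 hu2 h13 hu1 hu3

end notri

end S13
namespace S13
variable {V : Type*} [Fintype V] [DecidableEq V] {E : V → V → Prop} [DecidableRel E]

section indep
variable {k : ℕ} (hind : ¬ HasIndep E k)
include hind

lemma indep_card_lt (s : Finset V) (h : ∀ x ∈ s, ∀ y ∈ s, ¬ E x y) (hk : k ≤ s.card) :
    False := by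
  obtain ⟨t, hts, htc⟩ := Finset.exists_subset_card_eq hk
  exact hind ⟨t, htc, fun x hx y hy => h x (hts hx) y (hts hy)⟩

lemma outN_card_lt (hor : IsOriented E) (hno : ¬ ∃ a b c : V, E a b ∧ E b c ∧ E a c)
    (v : V) : (outN E v).card < k ∧ (inN E v).card < k := by
  constructor
  · by_contra hc
    push_neg at hc
    refine indep_card_lt hind (outN E v) ?_ hc
    intro x hx y hy hxy
    simp only [outN, Finset.mem_filter] at hx hy
    exact hno ⟨v, x, y, hx.2, hxy, hy.2⟩
  · by_contra hc
    push_neg at hc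
    refine indep_card_lt hind (inN E v) ?_ hc
    intro x hx y hy hxy
    simp only [inN, Finset.mem_filter] at hx hy
    exact hno ⟨x, y, v, hxy, hy.2, hx.2⟩

end indep

/-! induced graphs -/

def indE (W : Finset V) (E : V → V → Prop) : ↥W → ↥W → Prop := fun x y => E x.1 y.1

instance (W : Finset V) : DecidableRel (indE W E) := fun x y =>
  inferInstanceAs (Decidable (E x.1 y.1))

lemma ind_oriented (W : Finset V) (hor : IsOriented E) : IsOriented (indE W E) :=
  fun x y h => hor x.1 y.1 h

lemma ind_notri (W : Finset V) (hno : ¬ ∃ a b c : V, E a b ∧ E b c ∧ E a c) :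
    ¬ ∃ a b c : ↥W, indE W E a b ∧ indE W E b c ∧ indE W E a c := by
  rintro ⟨a, b, c, h1, h2, h3⟩
  exact hno ⟨a.1, b.1, c.1, h1, h2, h3⟩

/-- extension lemma: if `R` is independent, disjoint from `W`, and totally nonadjacent
to `W`, then an independent (k - R.card)-set in `W` extends to an independent k-set. -/
lemma ind_noIndep {k : ℕ} (hind : ¬ HasIndep E k) (R W : Finset V)
    (hRk : R.card ≤ k)
    (hRind : ∀ x ∈ R, ∀ y ∈ R, ¬ E x y)
    (hRW : ∀ x ∈ R, ∀ w ∈ W, ¬ E x w ∧ ¬ E w x)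
    (hdisj : Disjoint R W) :
    ¬ HasIndep (indE W E) (k - R.card) := by
  rintro ⟨t, htc, hti⟩
  set s : Finset V := t.map ⟨Subtype.val, Subtype.val_injective⟩ ∪ R with hs
  have hsub : ∀ x ∈ t.map ⟨Subtype.val, Subtype.val_injective⟩, x ∈ W := by
    intro x hx
    simp only [Finset.mem_map, Function.Embedding.coeFn_mk] at hx
    obtain ⟨y, -, rfl⟩ := hx
    exact y.2
  have hd : Disjoint (t.map ⟨Subtype.val, Subtype.val_injective⟩) R := by
    rw [Finset.disjoint_left]
    intro a ha haR
    exact (Finset.disjoint_left.mp hdisj) haR (hsub a ha)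
  apply hind
  refine ⟨s, ?_, ?_⟩
  · rw [hs, Finset.card_union_of_disjoint hd, Finset.card_map, htc]
    omega
  · intro x hx y hy
    rw [hs, Finset.mem_union] at hx hy
    rcases hx with hx | hx <;> rcases hy with hy | hy
    · simp only [Finset.mem_map, Function.Embedding.coeFn_mk] at hx hy
      obtain ⟨x', hx', rfl⟩ := hx
      obtain ⟨y', hy', rfl⟩ := hy
      exact hti x' hx' y' hy'
    · exact fun h => (hRW y hy x (hsub x hx)).2 h
    · exact fun h => (hRW x hx y (hsub y hy)).1 h
    · exact hRind x hx y hy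

def F : ℕ → ℕ
  | 0 => 0
  | 1 => 0
  | 2 => 3
  | (n+3) => (n+3)*(n+2)+2

end S13
namespace S13
variable {V : Type*} [Fintype V] [DecidableEq V] {E : V → V → Prop} [DecidableRel E]

lemma indep_lt {k : ℕ} (hind : ¬ HasIndep E k) (T : Finset V)
    (hT : ∀ x ∈ T, ∀ y ∈ T, ¬ E x y) : T.card < k :=
  lt_of_not_ge fun h => indep_card_lt hind T hT h

lemma indep_insert_of (a : V) (T : Finset V) (hT : ∀ x ∈ T, ∀ y ∈ T, ¬ E x y)
    (ha : ∀ x ∈ T, ¬ E a x ∧ ¬ E x a) (haa : ¬ E a a) :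
    ∀ x ∈ insert a T, ∀ y ∈ insert a T, ¬ E x y := by
  intro x hx y hy
  rcases Finset.mem_insert.mp hx with h1 | h1
  · rcases Finset.mem_insert.mp hy with h2 | h2
    · subst h1; subst h2; exact haa
    · subst h1; exact (ha y h2).1
  · rcases Finset.mem_insert.mp hy with h2 | h2
    · subst h2; exact (ha x h1).2
    · exact hT x h1 y h2

variable (E) in
/-- number of neighbours of `x` inside `S` -/
def dS (S : Finset V) (x : V) : ℕ := (S.filter (fun u => adj E x u)).card

section parts
variable (hor : IsOriented E)
include hor

lemma partitionS (S : Finset V) {v : V} (hv : v ∈ S) :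
    S.card = 1 + dS E S v + (S.filter (fun u => u ≠ v ∧ ¬ adj E v u)).card := by
  have hveq : ∀ u, adj E v u ↔ adj E u v := fun u => ⟨adj_symm, adj_symm⟩
  have h1 : S = insert v ((S.filter (fun u => adj E v u)) ∪
      (S.filter (fun u => u ≠ v ∧ ¬ adj E v u))) := by
    ext u
    simp only [Finset.mem_insert, Finset.mem_union, Finset.mem_filter]
    constructor
    · intro hu
      by_cases h1 : u = v
      · exact Or.inl h1
      · by_cases h2 : adj E v u
        · exact Or.inr (Or.inl ⟨hu, h2⟩)
        · exact Or.inr (Or.inr ⟨hu, h1, h2⟩)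
    · rintro (rfl | ⟨h, -⟩ | ⟨h, -⟩) <;> [exact hv; exact h; exact h]
  have hv1 : v ∉ (S.filter (fun u => adj E v u)) ∪
      (S.filter (fun u => u ≠ v ∧ ¬ adj E v u)) := by
    simp only [Finset.mem_union, Finset.mem_filter]
    rintro (⟨-, h⟩ | ⟨-, h, -⟩)
    · exact h.elim (irrefl hor v) (irrefl hor v)
    · exact h rfl
  have hd : Disjoint (S.filter (fun u => adj E v u))
      (S.filter (fun u => u ≠ v ∧ ¬ adj E v u)) := by
    rw [Finset.disjoint_left]
    rintro a ha hb
    simp only [Finset.mem_filter] at ha hb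
    exact hb.2.2 ha.2
  have hc := congrArg Finset.card h1
  rw [Finset.card_insert_of_notMem hv1, Finset.card_union_of_disjoint hd] at hc
  rw [dS]
  have : ∀ u, (adj E v u) ↔ (adj E v u) := fun _ => Iff.rfl
  rw [show S.filter (fun u => adj E v u) = S.filter (fun u => adj E v u) from rfl] at hc
  omega

/-- the filter in dS at v, seen from v -/
lemma dS_filter_symm (S : Finset V) (v : V) :
    S.filter (fun u => adj E v u) = S.filter (fun u => adj E u v) := by
  apply Finset.filter_congr
  intro x _
  exact ⟨fun h => adj_symm h, fun h => adj_symm h⟩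

end parts

/-- independent sets: out-neighbourhoods inside any set -/
lemma out_indep (hno : ¬ ∃ a b c : V, E a b ∧ E b c ∧ E a c) (s : V) (T : Finset V)
    (hT : ∀ x ∈ T, E s x) : ∀ x ∈ T, ∀ y ∈ T, ¬ E x y :=
  fun x hx y hy hxy => hno ⟨s, x, y, hT x hx, hxy, hT y hy⟩

lemma in_indep (hno : ¬ ∃ a b c : V, E a b ∧ E b c ∧ E a c) (s : V) (T : Finset V)
    (hT : ∀ x ∈ T, E x s) : ∀ x ∈ T, ∀ y ∈ T, ¬ E x y :=
  fun x hx y hy hxy => hno ⟨x, y, s, hxy, hT y hy, hT x hx⟩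

/-- `key` for k = 2 : a TT3-free tournament has at most 3 vertices. -/
lemma key2 (hor : IsOriented E) (hno : ¬ ∃ a b c : V, E a b ∧ E b c ∧ E a c)
    (hind : ¬ HasIndep E 2) : Fintype.card V ≤ 3 := by
  rw [← Finset.card_univ]
  apply tourn_le3 hor hno
  intro x _ y _ hxy
  by_contra hadj
  rw [adj] at hadj
  push_neg at hadj
  have h2 : ({x, y} : Finset V).card = 2 := Finset.card_pair hxy
  refine indep_card_lt hind {x, y} ?_ (le_of_eq h2.symm)
  intro a ha b hb
  simp only [Finset.mem_insert, Finset.mem_singleton] at ha hb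
  rcases ha with rfl | rfl <;> rcases hb with rfl | rfl
  · exact irrefl hor _
  · exact hadj.1
  · exact hadj.2
  · exact irrefl hor _

end S13
namespace S13
variable {V : Type*} [Fintype V] [DecidableEq V] {E : V → V → Prop} [DecidableRel E]

instance : DecidableRel (flip E) := fun x y => inferInstanceAs (Decidable (E y x))

lemma pair_card4 {a b c d : V} (hab : a ≠ b) (hac : a ≠ c) (had : a ≠ d)
    (hbc : b ≠ c) (hbd : b ≠ d) (hcd : c ≠ d) : ({a, b, c, d} : Finset V).card = 4 := by
  rw [Finset.card_insert_of_notMem (by simp [hab, hac, had]),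
    Finset.card_insert_of_notMem (by simp [hbc, hbd]),
    Finset.card_insert_of_notMem (by simp [hcd]), Finset.card_singleton]

section core
variable (hor : IsOriented E) (hno : ¬ ∃ a b c : V, E a b ∧ E b c ∧ E a c)
include hor hno

lemma deg5_case (S : Finset V) (hS : S.card = 14)
    (h4 : ∀ T ⊆ S, (∀ x ∈ T, ∀ y ∈ T, ¬ E x y) → T.card < 4)
    (v' : V) (hv' : v' ∈ S) (hd5 : dS E S v' = 5)
    (hoS : (S.filter (fun u => E v' u)).card = 3)
    (hiS : (S.filter (fun u => E u v')).card = 2) :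
    (S.filter (fun x => dS E S x = 5)).card ≤ 9 := by
  have hpart0 := partitionS hor S hv'
  set A' := S.filter (fun u => E v' u) with hA'
  set B' := S.filter (fun u => E u v') with hB'
  set S' := S.filter (fun u => u ≠ v' ∧ ¬ adj E v' u) with hS'
  have hS'c : S'.card = 8 := by
    rw [hd5] at hpart0
    omega
  have hS'S : S' ⊆ S := Finset.filter_subset _ _
  have hA'S : A' ⊆ S := Finset.filter_subset _ _
  have hB'S : B' ⊆ S := Finset.filter_subset _ _
  have hS'mem : ∀ x ∈ S', x ≠ v' ∧ ¬ adj E v' x := by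
    intro x hx; rw [hS', Finset.mem_filter] at hx; exact hx.2
  have hA'mem : ∀ x ∈ A', E v' x := by
    intro x hx; rw [hA', Finset.mem_filter] at hx; exact hx.2
  have hB'mem : ∀ x ∈ B', E x v' := by
    intro x hx; rw [hB', Finset.mem_filter] at hx; exact hx.2
  have hA'ind : ∀ x ∈ A', ∀ y ∈ A', ¬ E x y := out_indep hno v' A' hA'mem
  have hB'ind : ∀ x ∈ B', ∀ y ∈ B', ¬ E x y := in_indep hno v' B' hB'mem
  have hvS' : v' ∉ S' := fun h => (hS'mem v' h).1 rfl
  -- degrees within S' are exactly 4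
  have hSN : ∀ s' ∈ S', dS E S' s' = 4 := by
    intro s' hs'
    have hpart := partitionS hor S' hs'
    set W'' := S'.filter (fun x => x ≠ s' ∧ ¬ adj E s' x) with hW''
    have hW3 : W''.card ≤ 3 := by
      apply tourn_le3 hor hno
      intro x hx y hy hxy
      by_contra hadj
      have hxS' : x ∈ S' := Finset.mem_of_mem_filter _ hx
      have hyS' : y ∈ S' := Finset.mem_of_mem_filter _ hy
      have hxW : x ≠ s' ∧ ¬ adj E s' x := by
        rw [hW'', Finset.mem_filter] at hx; exact hx.2
      have hyW : y ≠ s' ∧ ¬ adj E s' y := by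
        rw [hW'', Finset.mem_filter] at hy; exact hy.2
      have hxyind : ∀ z ∈ ({x, y} : Finset V), ∀ w ∈ ({x, y} : Finset V), ¬ E z w := by
        intro z hz w hw
        simp only [Finset.mem_insert, Finset.mem_singleton] at hz hw
        rcases hz with rfl | rfl <;> rcases hw with rfl | rfl
        · exact irrefl hor _
        · exact fun h => hadj (Or.inl h)
        · exact fun h => hadj (Or.inr h)
        · exact irrefl hor _
      have hsind : ∀ z ∈ insert s' ({x, y} : Finset V), ∀ w ∈ insert s' ({x, y} : Finset V),
          ¬ E z w := by
        apply indep_insert_of _ _ hxyind _ (irrefl hor _)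
        intro z hz
        simp only [Finset.mem_insert, Finset.mem_singleton] at hz
        rcases hz with rfl | rfl
        · exact ⟨fun h => hxW.2 (Or.inl h), fun h => hxW.2 (Or.inr h)⟩
        · exact ⟨fun h => hyW.2 (Or.inl h), fun h => hyW.2 (Or.inr h)⟩
      have hvind : ∀ z ∈ insert v' (insert s' ({x, y} : Finset V)),
          ∀ w ∈ insert v' (insert s' ({x, y} : Finset V)), ¬ E z w := by
        apply indep_insert_of _ _ hsind _ (irrefl hor _)
        intro z hz
        have hzS' : z ∈ S' := by
          rcases Finset.mem_insert.mp hz with rfl | hz2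
          · exact hs'
          · rcases Finset.mem_insert.mp hz2 with rfl | hz3
            · exact hxS'
            · rw [Finset.mem_singleton] at hz3; subst hz3; exact hyS'
        have := (hS'mem z hzS').2
        exact ⟨fun h => this (Or.inl h), fun h => this (Or.inr h)⟩
      have hT : (insert v' (insert s' ({x, y} : Finset V))).card = 4 := by
        rw [Finset.card_insert_of_notMem, Finset.card_insert_of_notMem,
          Finset.card_pair hxy]
        · simp only [Finset.mem_insert, Finset.mem_singleton]
          push_neg
          exact ⟨hxW.1.symm, hyW.1.symm⟩
        · simp only [Finset.mem_insert, Finset.mem_singleton]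
          push_neg
          exact ⟨(hS'mem s' hs').1.symm, (hS'mem x hxS').1.symm, (hS'mem y hyS').1.symm⟩
      have h4' := h4 (insert v' (insert s' ({x, y} : Finset V))) ?_ hvind
      · omega
      · intro z hz
        rcases Finset.mem_insert.mp hz with rfl | hz2
        · exact hv'
        · rcases Finset.mem_insert.mp hz2 with rfl | hz3
          · exact hS'S hs'
          · rcases Finset.mem_insert.mp hz3 with rfl | hz4
            · exact hS'S hxS'
            · rw [Finset.mem_singleton] at hz4; subst hz4; exact hS'S hyS'
    have hup : dS E S' s' ≤ 4 := by
      have hXo : (S'.filter (fun u => E s' u)).card ≤ 2 := by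
        have hcard := h4 (insert v' (S'.filter (fun u => E s' u))) ?_ ?_
        · have : v' ∉ S'.filter (fun u => E s' u) :=
            fun h => hvS' (Finset.mem_of_mem_filter _ h)
          rw [Finset.card_insert_of_notMem this] at hcard
          omega
        · intro z hz
          rcases Finset.mem_insert.mp hz with rfl | hz
          · exact hv'
          · exact hS'S (Finset.mem_of_mem_filter _ hz)
        · apply indep_insert_of
          · exact out_indep hno s' _ (fun x hx => (Finset.mem_filter.mp hx).2)
          · intro x hx
            have hxS' := Finset.mem_of_mem_filter _ hx
            have := (hS'mem x hxS').2
            exact ⟨fun h1 => this (Or.inl h1), fun h1 => this (Or.inr h1)⟩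
          · exact irrefl hor _
      have hXi : (S'.filter (fun u => E u s')).card ≤ 2 := by
        have hcard := h4 (insert v' (S'.filter (fun u => E u s'))) ?_ ?_
        · have : v' ∉ S'.filter (fun u => E u s') :=
            fun h => hvS' (Finset.mem_of_mem_filter _ h)
          rw [Finset.card_insert_of_notMem this] at hcard
          omega
        · intro z hz
          rcases Finset.mem_insert.mp hz with rfl | hz
          · exact hv'
          · exact hS'S (Finset.mem_of_mem_filter _ hz)
        · apply indep_insert_of
          · exact in_indep hno s' _ (fun x hx => (Finset.mem_filter.mp hx).2)
          · intro x hx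
            have hxS' := Finset.mem_of_mem_filter _ hx
            have := (hS'mem x hxS').2
            exact ⟨fun h1 => this (Or.inl h1), fun h1 => this (Or.inr h1)⟩
          · exact irrefl hor _
      have hsub : S'.filter (fun u => adj E s' u) ⊆
          (S'.filter (fun u => E s' u)) ∪ (S'.filter (fun u => E u s')) := by
        intro u hu
        rw [Finset.mem_filter] at hu
        rcases hu.2 with h | h
        · exact Finset.mem_union_left _ (Finset.mem_filter.mpr ⟨hu.1, h⟩)
        · exact Finset.mem_union_right _ (Finset.mem_filter.mpr ⟨hu.1, h⟩)
      calc dS E S' s' ≤ _ := Finset.card_le_card hsub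
        _ ≤ _ := Finset.card_union_le _ _
        _ ≤ 4 := by omega
    omega
  -- decomposition of S-degree for vertices of S'
  have hdecomp : ∀ s' ∈ S', dS E S s' =
      (A'.filter (fun u => adj E s' u)).card + (B'.filter (fun u => adj E s' u)).card
        + dS E S' s' := by
    intro s' hs'
    have hsplit : S.filter (fun u => adj E s' u) =
        (A'.filter (fun u => adj E s' u)) ∪ ((B'.filter (fun u => adj E s' u)) ∪
          (S'.filter (fun u => adj E s' u))) := by
      ext u
      simp only [Finset.mem_union, Finset.mem_filter, hA', hB', hS']
      constructor
      · rintro ⟨huS, hadj⟩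
        have huv : u ≠ v' := by
          rintro rfl
          exact (hS'mem s' hs').2 (adj_symm hadj)
        by_cases h1 : E v' u
        · exact Or.inl ⟨⟨huS, h1⟩, hadj⟩
        · by_cases h2 : E u v'
          · exact Or.inr (Or.inl ⟨⟨huS, h2⟩, hadj⟩)
          · exact Or.inr (Or.inr ⟨⟨huS, huv, fun h => h.elim h1 h2⟩, hadj⟩)
      · rintro (⟨⟨h, -⟩, h2⟩ | ⟨⟨h, -⟩, h2⟩ | ⟨⟨h, -⟩, h2⟩) <;> exact ⟨h, h2⟩
    have hd1 : Disjoint (A'.filter (fun u => adj E s' u))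
        ((B'.filter (fun u => adj E s' u)) ∪ (S'.filter (fun u => adj E s' u))) := by
      rw [Finset.disjoint_left]
      intro a ha hb
      have haA : a ∈ A' := Finset.mem_of_mem_filter _ ha
      rcases Finset.mem_union.mp hb with hb | hb
      · exact hor _ _ (hA'mem a haA) (hB'mem a (Finset.mem_of_mem_filter _ hb))
      · exact (hS'mem a (Finset.mem_of_mem_filter _ hb)).2 (Or.inl (hA'mem a haA))
    have hd2 : Disjoint (B'.filter (fun u => adj E s' u))
        (S'.filter (fun u => adj E s' u)) := by
      rw [Finset.disjoint_left]
      intro a ha hb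
      exact (hS'mem a (Finset.mem_of_mem_filter _ hb)).2
        (Or.inr (hB'mem a (Finset.mem_of_mem_filter _ ha)))
    simp only [dS]
    rw [hsplit, Finset.card_union_of_disjoint hd1, Finset.card_union_of_disjoint hd2]
    omega
  -- every vertex of S' has a neighbour in A'
  have haN : ∀ s' ∈ S', 0 < (A'.filter (fun u => adj E s' u)).card := by
    intro s' hs'
    rw [Finset.card_pos]
    by_contra hemp
    rw [Finset.not_nonempty_iff_eq_empty, Finset.filter_eq_empty_iff] at hemp
    have hs'A : s' ∉ A' := by
      intro h
      exact (hS'mem s' hs').2 (Or.inl (hA'mem s' h))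
    have hcard := h4 (insert s' A') ?_ ?_
    · rw [Finset.card_insert_of_notMem hs'A, hoS] at hcard
      omega
    · intro z hz
      rcases Finset.mem_insert.mp hz with rfl | hz
      · exact hS'S hs'
      · exact hA'S hz
    · apply indep_insert_of _ _ hA'ind _ (irrefl hor _)
      intro x hx
      have := hemp hx
      exact ⟨fun h => this (Or.inl h), fun h => this (Or.inr h)⟩
  -- vertices of S' with no B'-neighbour form a tournament
  set Z' := S'.filter (fun x => ∀ u ∈ B', ¬ adj E x u) with hZ'
  have hZ3 : Z'.card ≤ 3 := by
    apply tourn_le3 hor hno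
    intro x hx y hy hxy
    by_contra hadj
    have hxZ : ∀ u ∈ B', ¬ adj E x u := by
      rw [hZ', Finset.mem_filter] at hx; exact hx.2
    have hyZ : ∀ u ∈ B', ¬ adj E y u := by
      rw [hZ', Finset.mem_filter] at hy; exact hy.2
    have hxS' : x ∈ S' := Finset.mem_of_mem_filter _ hx
    have hyS' : y ∈ S' := Finset.mem_of_mem_filter _ hy
    have hxB : x ∉ B' := fun h => (hS'mem x hxS').2 (Or.inr (hB'mem x h))
    have hyB : y ∉ B' := fun h => (hS'mem y hyS').2 (Or.inr (hB'mem y h))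
    have hind1 : ∀ z ∈ insert y B', ∀ w ∈ insert y B', ¬ E z w := by
      apply indep_insert_of _ _ hB'ind _ (irrefl hor _)
      intro u hu
      exact ⟨fun h => hyZ u hu (Or.inl h), fun h => hyZ u hu (Or.inr h)⟩
    have hind2 : ∀ z ∈ insert x (insert y B'), ∀ w ∈ insert x (insert y B'), ¬ E z w := by
      apply indep_insert_of _ _ hind1 _ (irrefl hor _)
      intro u hu
      rcases Finset.mem_insert.mp hu with rfl | hu
      · exact ⟨fun h => hadj (Or.inl h), fun h => hadj (Or.inr h)⟩
      · exact ⟨fun h => hxZ u hu (Or.inl h), fun h => hxZ u hu (Or.inr h)⟩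
    have hcard := h4 (insert x (insert y B')) ?_ hind2
    · rw [Finset.card_insert_of_notMem, Finset.card_insert_of_notMem hyB, hiS] at hcard
      · omega
      · simp only [Finset.mem_insert]
        push_neg
        exact ⟨hxy, hxB⟩
    · intro z hz
      rcases Finset.mem_insert.mp hz with rfl | hz
      · exact hS'S hxS'
      · rcases Finset.mem_insert.mp hz with rfl | hz
        · exact hS'S hyS'
        · exact hB'S hz
  -- final containment
  have hfinal : S.filter (fun x => dS E S x = 5) ⊆ insert v' (A' ∪ B' ∪ Z') := by
    intro x hx
    rw [Finset.mem_filter] at hx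
    obtain ⟨hxS, hx5⟩ := hx
    rcases eq_or_ne x v' with rfl | hxv
    · exact Finset.mem_insert_self _ _
    apply Finset.mem_insert_of_mem
    by_cases hadj : adj E v' x
    · rcases hadj with h | h
      · exact Finset.mem_union_left _ (Finset.mem_union_left _
          (Finset.mem_filter.mpr ⟨hxS, h⟩))
      · exact Finset.mem_union_left _ (Finset.mem_union_right _
          (Finset.mem_filter.mpr ⟨hxS, h⟩))
    · have hxS' : x ∈ S' := by
        rw [hS', Finset.mem_filter]
        exact ⟨hxS, hxv, hadj⟩
      have h1 := hdecomp x hxS'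
      have h2 := hSN x hxS'
      have h3 := haN x hxS'
      rw [hx5, h2] at h1
      have hB0 : (B'.filter (fun u => adj E x u)).card = 0 := by omega
      rw [Finset.card_eq_zero, Finset.filter_eq_empty_iff] at hB0
      refine Finset.mem_union_right _ ?_
      rw [hZ', Finset.mem_filter]
      exact ⟨hxS', fun u hu => hB0 hu⟩
  calc (S.filter (fun x => dS E S x = 5)).card
      ≤ (insert v' (A' ∪ B' ∪ Z')).card := Finset.card_le_card hfinal
    _ ≤ 1 + (A' ∪ B' ∪ Z').card := by
        have := Finset.card_insert_le v' (A' ∪ B' ∪ Z')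
        omega
    _ ≤ 1 + ((A' ∪ B').card + Z'.card) := by
        have := Finset.card_union_le (A' ∪ B') Z'
        omega
    _ ≤ 1 + (A'.card + B'.card + Z'.card) := by
        have := Finset.card_union_le A' B'
        omega
    _ ≤ 9 := by rw [hoS, hiS]; omega

end core
end S13
namespace S13
variable {V : Type*} [Fintype V] [DecidableEq V] {E : V → V → Prop} [DecidableRel E]

lemma adj_flip (x y : V) : adj (flip E) x y ↔ adj E x y := Or.comm

lemma dS_flip (S : Finset V) (x : V) : dS (flip E) S x = dS E S x := by
  unfold dS
  congr 1
  exact Finset.filter_congr (fun u _ => adj_flip x u)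

lemma flip_oriented (hor : IsOriented E) : IsOriented (flip E) := fun x y h => hor y x h

lemma flip_notri (hno : ¬ ∃ a b c : V, E a b ∧ E b c ∧ E a c) :
    ¬ ∃ a b c : V, flip E a b ∧ flip E b c ∧ flip E a c := by
  rintro ⟨a, b, c, h1, h2, h3⟩
  exact hno ⟨c, b, a, h2, h1, h3⟩

lemma deg5_core (hor : IsOriented E) (hno : ¬ ∃ a b c : V, E a b ∧ E b c ∧ E a c)
    (S : Finset V) (hS : S.card = 14)
    (h4 : ∀ T ⊆ S, (∀ x ∈ T, ∀ y ∈ T, ¬ E x y) → T.card < 4) :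
    (S.filter (fun x => dS E S x = 5)).card ≤ 9 := by
  rcases (S.filter (fun x => dS E S x = 5)).eq_empty_or_nonempty with he | ⟨v', hv'⟩
  · rw [he]; simp
  rw [Finset.mem_filter] at hv'
  obtain ⟨hv'S, hd5⟩ := hv'
  have hsplit : S.filter (fun u => adj E v' u) =
      S.filter (fun u => E v' u) ∪ S.filter (fun u => E u v') := by
    ext u
    simp only [Finset.mem_union, Finset.mem_filter]
    simp only [adj]
    tauto
  have hdisj : Disjoint (S.filter (fun u => E v' u)) (S.filter (fun u => E u v')) := by
    rw [Finset.disjoint_left]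
    intro a ha hb
    exact hor _ _ (Finset.mem_filter.mp ha).2 (Finset.mem_filter.mp hb).2
  have hsum : (S.filter (fun u => E v' u)).card + (S.filter (fun u => E u v')).card = 5 := by
    rw [← Finset.card_union_of_disjoint hdisj, ← hsplit]
    exact hd5
  have hole : (S.filter (fun u => E v' u)).card ≤ 3 := by
    have := h4 (S.filter (fun u => E v' u)) (Finset.filter_subset _ _)
      (out_indep hno v' _ (fun x hx => (Finset.mem_filter.mp hx).2))
    omega
  have hile : (S.filter (fun u => E u v')).card ≤ 3 := by
    have := h4 (S.filter (fun u => E u v')) (Finset.filter_subset _ _)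
      (in_indep hno v' _ (fun x hx => (Finset.mem_filter.mp hx).2))
    omega
  by_cases hcase : (S.filter (fun u => E v' u)).card = 3
  · exact deg5_case hor hno S hS h4 v' hv'S hd5 hcase (by omega)
  · -- flip case
    have h4' : ∀ T ⊆ S, (∀ x ∈ T, ∀ y ∈ T, ¬ flip E x y) → T.card < 4 := by
      intro T hT h
      exact h4 T hT (fun x hx y hy => h y hy x hx)
    have hof : S.filter (fun u => flip E v' u) = S.filter (fun u => E u v') :=
      Finset.filter_congr (fun u _ => Iff.rfl)
    have hif : S.filter (fun u => flip E u v') = S.filter (fun u => E v' u) :=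
      Finset.filter_congr (fun u _ => Iff.rfl)
    have hres := deg5_case (flip_oriented hor) (flip_notri hno) S hS h4' v' hv'S
      (by rw [dS_flip]; exact hd5)
      (by rw [hof]; omega) (by rw [hif]; omega)
    have : S.filter (fun x => dS (flip E) S x = 5) = S.filter (fun x => dS E S x = 5) :=
      Finset.filter_congr (fun x _ => by rw [dS_flip])
    rwa [this] at hres

end S13
namespace S13
variable {V : Type*} [Fintype V] [DecidableEq V] {E : V → V → Prop} [DecidableRel E]

/-- degree decomposition at a non-neighbour of `v` -/
lemma deg_decomp (hor : IsOriented E) (v s : V) (hs : s ∈ nonN E v) :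
    deg E s = ((outN E v).filter (fun u => adj E s u)).card
      + ((inN E v).filter (fun u => adj E s u)).card + dS E (nonN E v) s := by
  have hsv : ¬ adj E v s := by
    rw [nonN, Finset.mem_filter] at hs
    exact hs.2.2
  have hsplit : nbr E s = ((outN E v).filter (fun u => adj E s u)) ∪
      (((inN E v).filter (fun u => adj E s u)) ∪
        ((nonN E v).filter (fun u => adj E s u))) := by
    ext u
    simp only [nbr, outN, inN, nonN, Finset.mem_union, Finset.mem_filter, Finset.mem_univ,
      true_and]
    constructor
    · intro hadj
      have huv : u ≠ v := by
        rintro rfl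
        exact hsv (adj_symm hadj)
      by_cases h1 : E v u
      · exact Or.inl ⟨h1, hadj⟩
      · by_cases h2 : E u v
        · exact Or.inr (Or.inl ⟨h2, hadj⟩)
        · exact Or.inr (Or.inr ⟨⟨huv, fun h => h.elim h1 h2⟩, hadj⟩)
    · rintro (⟨-, h⟩ | ⟨-, h⟩ | ⟨-, h⟩) <;> exact h
  have hd1 : Disjoint ((outN E v).filter (fun u => adj E s u))
      (((inN E v).filter (fun u => adj E s u)) ∪
        ((nonN E v).filter (fun u => adj E s u))) := by
    rw [Finset.disjoint_left]
    intro a ha hb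
    have haA : E v a := (Finset.mem_filter.mp (Finset.mem_of_mem_filter _ ha)).2
    rcases Finset.mem_union.mp hb with hb | hb
    · exact hor _ _ haA (Finset.mem_filter.mp (Finset.mem_of_mem_filter _ hb)).2
    · exact (Finset.mem_filter.mp (Finset.mem_of_mem_filter _ hb)).2.2 (Or.inl haA)
  have hd2 : Disjoint ((inN E v).filter (fun u => adj E s u))
      ((nonN E v).filter (fun u => adj E s u)) := by
    rw [Finset.disjoint_left]
    intro a ha hb
    exact (Finset.mem_filter.mp (Finset.mem_of_mem_filter _ hb)).2.2
      (Or.inr (Finset.mem_filter.mp (Finset.mem_of_mem_filter _ ha)).2)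
  rw [deg, hsplit, Finset.card_union_of_disjoint hd1, Finset.card_union_of_disjoint hd2, dS]
  omega

/-- generic bound: vertices of `S` with exactly one neighbour in an independent
set `C` (with `C.card + 1 = k`) number at most `2 * C.card`. -/
lemma Qu_bound {k : ℕ} (hor : IsOriented E) (hno : ¬ ∃ a b c : V, E a b ∧ E b c ∧ E a c)
    (hind : ¬ HasIndep E k) (C S : Finset V)
    (hCind : ∀ x ∈ C, ∀ y ∈ C, ¬ E x y)
    (hdisj : ∀ s ∈ S, s ∉ C)
    (hCcard : C.card + 1 = k) :
    (S.filter (fun s => (C.filter (fun u => adj E s u)).card = 1)).card ≤ 2 * C.card := by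
  classical
  set Q : V → Finset V := fun u =>
    S.filter (fun s => C.filter (fun u' => adj E s u') = {u}) with hQ
  have hsub : (S.filter (fun s => (C.filter (fun u => adj E s u)).card = 1)) ⊆
      C.biUnion Q := by
    intro s hs
    rw [Finset.mem_filter] at hs
    obtain ⟨hsS, hs1⟩ := hs
    obtain ⟨u, hu⟩ := Finset.card_eq_one.mp hs1
    have huC : u ∈ C := by
      have : u ∈ C.filter (fun u' => adj E s u') := by rw [hu]; exact Finset.mem_singleton_self u
      exact Finset.mem_of_mem_filter _ this
    exact Finset.mem_biUnion.mpr ⟨u, huC, Finset.mem_filter.mpr ⟨hsS, hu⟩⟩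
  have hQ2 : ∀ u ∈ C, (Q u).card ≤ 2 := by
    intro u huC
    by_contra hcon
    push_neg at hcon
    obtain ⟨t, hts, ht3⟩ := Finset.exists_subset_card_eq hcon
    obtain ⟨s1, s2, s3, h12, h13, h23, rfl⟩ := Finset.card_eq_three.mp ht3
    have hmem : ∀ s ∈ ({s1, s2, s3} : Finset V),
        s ∈ S ∧ C.filter (fun u' => adj E s u') = {u} := by
      intro s hs
      have := hts hs
      rw [hQ, Finset.mem_filter] at this
      exact this
    have hadju : ∀ s ∈ ({s1, s2, s3} : Finset V), adj E s u := by
      intro s hs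
      have h := (hmem s hs).2
      have : u ∈ C.filter (fun u' => adj E s u') := by
        rw [h]; exact Finset.mem_singleton_self u
      exact (Finset.mem_filter.mp this).2
    have hpadj : ∀ s ∈ ({s1, s2, s3} : Finset V), ∀ s' ∈ ({s1, s2, s3} : Finset V),
        s ≠ s' → adj E s s' := by
      intro s hs s' hs' hne
      by_contra hnadj
      have hsS := (hmem s hs).1
      have hs'S := (hmem s' hs').1
      have hsfil := (hmem s hs).2
      have hs'fil := (hmem s' hs').2
      have hnadjC : ∀ x, x ∈ C.erase u → ¬ adj E s x ∧ ¬ adj E s' x := by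
        intro x hx
        obtain ⟨hxu, hxC⟩ := Finset.mem_erase.mp hx
        constructor
        · intro h
          have : x ∈ C.filter (fun u' => adj E s u') := Finset.mem_filter.mpr ⟨hxC, h⟩
          rw [hsfil, Finset.mem_singleton] at this
          exact hxu this
        · intro h
          have : x ∈ C.filter (fun u' => adj E s' u') := Finset.mem_filter.mpr ⟨hxC, h⟩
          rw [hs'fil, Finset.mem_singleton] at this
          exact hxu this
      have hind1 : ∀ z ∈ insert s' (C.erase u), ∀ w ∈ insert s' (C.erase u), ¬ E z w := by
        apply indep_insert_of _ _ ?_ ?_ (irrefl hor _)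
        · intro x hx y hy
          exact hCind x (Finset.mem_of_mem_erase hx) y (Finset.mem_of_mem_erase hy)
        · intro x hx
          have := (hnadjC x hx).2
          exact ⟨fun h => this (Or.inl h), fun h => this (Or.inr h)⟩
      have hind2 : ∀ z ∈ insert s (insert s' (C.erase u)),
          ∀ w ∈ insert s (insert s' (C.erase u)), ¬ E z w := by
        apply indep_insert_of _ _ hind1 _ (irrefl hor _)
        intro x hx
        rcases Finset.mem_insert.mp hx with rfl | hx
        · exact ⟨fun h => hnadj (Or.inl h), fun h => hnadj (Or.inr h)⟩
        · have := (hnadjC x hx).1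
          exact ⟨fun h => this (Or.inl h), fun h => this (Or.inr h)⟩
      have hcardT : (insert s (insert s' (C.erase u))).card = k := by
        have hs'ne : s' ∉ C.erase u := fun h => hdisj s' hs'S (Finset.mem_of_mem_erase h)
        have hsne : s ∉ insert s' (C.erase u) := by
          intro h
          rcases Finset.mem_insert.mp h with h | h
          · exact hne h
          · exact hdisj s hsS (Finset.mem_of_mem_erase h)
        rw [Finset.card_insert_of_notMem hsne, Finset.card_insert_of_notMem hs'ne,
          Finset.card_erase_of_mem huC]
        have hpos : 0 < C.card := Finset.card_pos.mpr ⟨u, huC⟩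
        omega
      have := indep_lt hind _ hind2
      omega
    have hne12 : s1 ≠ s2 := h12
    have hne13 : s1 ≠ s3 := h13
    have hne23 : s2 ≠ s3 := h23
    have m1 : s1 ∈ ({s1, s2, s3} : Finset V) := by simp
    have m2 : s2 ∈ ({s1, s2, s3} : Finset V) := by simp
    have m3 : s3 ∈ ({s1, s2, s3} : Finset V) := by simp
    exact no_common3 hor hno (hpadj s1 m1 s2 m2 hne12) (hpadj s1 m1 s3 m3 hne13)
      (hpadj s2 m2 s3 m3 hne23) (hadju s1 m1) (hadju s2 m2) (hadju s3 m3)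
  calc (S.filter (fun s => (C.filter (fun u => adj E s u)).card = 1)).card
      ≤ (C.biUnion Q).card := Finset.card_le_card hsub
    _ ≤ ∑ u ∈ C, (Q u).card := Finset.card_biUnion_le
    _ ≤ C.card * 2 := by
        apply Finset.sum_le_card_nsmul
        intro u hu
        exact hQ2 u hu
    _ = 2 * C.card := by ring

end S13
namespace S13

universe u

theorem key (k : ℕ) : ∀ {V : Type u} [Fintype V] [DecidableEq V] (E : V → V → Prop)
    [DecidableRel E], IsOriented E → (¬ ∃ a b c : V, E a b ∧ E b c ∧ E a c) →
    ¬ HasIndep E k → Fintype.card V ≤ F k := by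
  induction k using Nat.strong_induction_on with
  | _ k IH =>
  intro V _ _ E _ hor hno hind
  have keyW : ∀ (R W : Finset V), R.card ≤ k → k - R.card < k →
      (∀ x ∈ R, ∀ y ∈ R, ¬ E x y) →
      (∀ x ∈ R, ∀ w ∈ W, ¬ E x w ∧ ¬ E w x) → Disjoint R W →
      W.card ≤ F (k - R.card) := by
    intro R W h1 h2 h3 h4 h5
    have hni := ind_noIndep hind R W h1 h3 h4 h5
    have := IH (k - R.card) h2 (indE W E) (ind_oriented W hor) (ind_notri W hno) hni
    rwa [Fintype.card_coe] at this
  have hnonN : 1 ≤ k → ∀ v : V, (nonN E v).card ≤ F (k-1) := by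
    intro hk v
    have h := keyW {v} (nonN E v) (by simpa using hk) (by simp; omega) ?_ ?_ ?_
    · simpa using h
    · intro x hx y hy
      rw [Finset.mem_singleton] at hx hy
      subst hx; subst hy
      exact irrefl hor _
    · intro x hx w hw
      rw [Finset.mem_singleton] at hx
      subst hx
      have := (Finset.mem_filter.mp hw).2.2
      exact ⟨fun h => this (Or.inl h), fun h => this (Or.inr h)⟩
    · rw [Finset.disjoint_left]
      intro a ha hb
      rw [Finset.mem_singleton] at ha
      subst ha
      exact (Finset.mem_filter.mp hb).2.1 rfl
  match k, IH, hind, hnonN, keyW with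
  | 0, IH, hind, hnonN, keyW =>
    exact absurd ⟨∅, rfl, by simp⟩ hind
  | 1, IH, hind, hnonN, keyW =>
    show Fintype.card V ≤ 0
    by_contra h
    push_neg at h
    obtain ⟨v⟩ := Fintype.card_pos_iff.mp h
    refine hind ⟨{v}, Finset.card_singleton v, ?_⟩
    intro x hx y hy
    rw [Finset.mem_singleton] at hx hy
    subst hx; subst hy
    exact irrefl hor _
  | 2, IH, hind, hnonN, keyW => exact key2 hor hno hind
  | 3, IH, hind, hnonN, keyW =>
    show Fintype.card V ≤ 8
    rcases isEmpty_or_nonempty V with he | hne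
    · rw [Fintype.card_eq_zero]; omega
    obtain ⟨v⟩ := hne
    have h1 := partition hor v
    have h2 := outN_card_lt hind hor hno v
    have h3 := hnonN (by omega) v
    rw [deg_eq hor] at h1
    have hF2 : F (3-1) = 3 := rfl
    omega
  | (n+4), IH, hind, hnonN, keyW =>
    show Fintype.card V ≤ (n+4)*(n+3)+2
    by_contra hc
    push_neg at hc
    -- nonempty
    have hpos : 0 < Fintype.card V := by
      have : 0 < (n+4)*(n+3)+2 := by positivity
      omega
    -- global equality phase
    have hglob : ∀ v : V, (outN E v).card = n+3 ∧ (inN E v).card = n+3 ∧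
        (nonN E v).card = (n+3)*(n+2)+2 := by
      intro v
      have h1 := partition hor v
      have h2 := outN_card_lt hind hor hno v
      have h3 := hnonN (by omega) v
      rw [deg_eq hor] at h1
      have hF : F (n+4-1) = (n+3)*(n+2)+2 := rfl
      rw [hF] at h3
      have hrel : (n+4)*(n+3) = (n+3)*(n+2) + 2*n + 6 := by ring
      set p := (n+4)*(n+3) with hp
      set q := (n+3)*(n+2) with hq
      omega
    obtain ⟨v⟩ := Fintype.card_pos_iff.mp hpos
    obtain ⟨hA, hB, hSc⟩ := hglob v
    have hAmem : ∀ x ∈ outN E v, E v x := fun x hx => (Finset.mem_filter.mp hx).2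
    have hBmem : ∀ x ∈ inN E v, E x v := fun x hx => (Finset.mem_filter.mp hx).2
    have hSmem : ∀ x ∈ nonN E v, x ≠ v ∧ ¬ adj E v x :=
      fun x hx => (Finset.mem_filter.mp hx).2
    have hSA : ∀ s ∈ nonN E v, s ∉ outN E v :=
      fun s hs h => (hSmem s hs).2 (Or.inl (hAmem s h))
    have hSB : ∀ s ∈ nonN E v, s ∉ inN E v :=
      fun s hs h => (hSmem s hs).2 (Or.inr (hBmem s h))
    have hvS : v ∉ nonN E v := fun h => (hSmem v h).1 rfl
    -- degree of every vertex
    have hdeg2 : ∀ s : V, deg E s = 2*n+6 := by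
      intro s
      have h := hglob s
      rw [deg_eq hor]
      omega
    -- decomposition for s ∈ S
    have hdecv : ∀ s ∈ nonN E v, 2*n+6 =
        ((outN E v).filter (fun u => adj E s u)).card
        + ((inN E v).filter (fun u => adj E s u)).card + dS E (nonN E v) s := by
      intro s hs
      rw [← hdeg2 s]
      exact deg_decomp hor v s hs
    -- every s ∈ S has a neighbour in A and in B
    have haN1 : ∀ s ∈ nonN E v, 1 ≤ ((outN E v).filter (fun u => adj E s u)).card := by
      intro s hs
      rw [Nat.succ_le, Finset.card_pos]
      by_contra hemp
      rw [Finset.not_nonempty_iff_eq_empty, Finset.filter_eq_empty_iff] at hemp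
      have hins : ∀ z ∈ insert s (outN E v), ∀ w ∈ insert s (outN E v), ¬ E z w := by
        apply indep_insert_of _ _ (out_indep hno v _ hAmem) _ (irrefl hor _)
        intro x hx
        have := hemp hx
        exact ⟨fun h => this (Or.inl h), fun h => this (Or.inr h)⟩
      have hlt := indep_lt hind _ hins
      rw [Finset.card_insert_of_notMem (hSA s hs), hA] at hlt
      omega
    have hbN1 : ∀ s ∈ nonN E v, 1 ≤ ((inN E v).filter (fun u => adj E s u)).card := by
      intro s hs
      rw [Nat.succ_le, Finset.card_pos]
      by_contra hemp
      rw [Finset.not_nonempty_iff_eq_empty, Finset.filter_eq_empty_iff] at hemp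
      have hins : ∀ z ∈ insert s (inN E v), ∀ w ∈ insert s (inN E v), ¬ E z w := by
        apply indep_insert_of _ _ (in_indep hno v _ hBmem) _ (irrefl hor _)
        intro x hx
        have := hemp hx
        exact ⟨fun h => this (Or.inl h), fun h => this (Or.inr h)⟩
      have hlt := indep_lt hind _ hins
      rw [Finset.card_insert_of_notMem (hSB s hs), hB] at hlt
      omega
    -- lower bound for degree within S
    have hsNlow : ∀ s ∈ nonN E v,
        (nonN E v).card ≤ 1 + dS E (nonN E v) s + F (n+2) := by
      intro s hs
      have hpart := partitionS hor (nonN E v) hs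
      have hW := keyW {v, s} ((nonN E v).filter (fun x => x ≠ s ∧ ¬ adj E s x))
        ?_ ?_ ?_ ?_ ?_
      · have h22 : n+4-({v,s} : Finset V).card = n+2 := by
          rw [Finset.card_pair (fun h => (hSmem s hs).1 h.symm)]
          omega
        rw [h22] at hW
        omega
      · rw [Finset.card_pair (fun h => (hSmem s hs).1 h.symm)]
        omega
      · rw [Finset.card_pair (fun h => (hSmem s hs).1 h.symm)]
        omega
      · intro x hx y hy
        have hnadj := (hSmem s hs).2
        rcases Finset.mem_insert.mp hx with rfl | hx <;>
          [skip; rw [Finset.mem_singleton] at hx]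
        · rcases Finset.mem_insert.mp hy with rfl | hy <;>
            [skip; rw [Finset.mem_singleton] at hy]
          · exact irrefl hor _
          · subst hy
            exact fun h => hnadj (Or.inl h)
        · subst hx
          rcases Finset.mem_insert.mp hy with rfl | hy <;>
            [skip; rw [Finset.mem_singleton] at hy]
          · exact fun h => hnadj (Or.inr h)
          · subst hy
            exact irrefl hor _
      · intro x hx w hw
        rw [Finset.mem_filter] at hw
        obtain ⟨hwS, -, hwnadj⟩ := hw
        rcases Finset.mem_insert.mp hx with rfl | hx <;>
          [skip; rw [Finset.mem_singleton] at hx]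
        · have := (hSmem w hwS).2
          exact ⟨fun h => this (Or.inl h), fun h => this (Or.inr h)⟩
        · subst hx
          exact ⟨fun h => hwnadj (Or.inl h), fun h => hwnadj (Or.inr h)⟩
      · rw [Finset.disjoint_left]
        intro a ha hb
        rw [Finset.mem_filter] at hb
        rcases Finset.mem_insert.mp ha with rfl | ha <;>
          [skip; rw [Finset.mem_singleton] at ha]
        · exact (hSmem a hb.1).1 rfl
        · subst ha
          exact hb.2.1 rfl
    -- now branch on n
    match n, hc, hglob, hA, hB, hSc, hdeg2, hdecv, haN1, hbN1, hsNlow with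
    | 0, hc, hglob, hA, hB, hSc, hdeg2, hdecv, haN1, hbN1, hsNlow =>
      -- k = 4
      have hsNup : ∀ s ∈ nonN E v, dS E (nonN E v) s ≤ 4 := by
        intro s hs
        have hXo : ((nonN E v).filter (fun u => E s u)).card ≤ 2 := by
          have hins : ∀ z ∈ insert v ((nonN E v).filter (fun u => E s u)),
              ∀ w ∈ insert v ((nonN E v).filter (fun u => E s u)), ¬ E z w := by
            apply indep_insert_of _ _
              (out_indep hno s _ (fun x hx => (Finset.mem_filter.mp hx).2)) _
              (irrefl hor _)
            intro x hx
            have := (hSmem x (Finset.mem_of_mem_filter _ hx)).2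
            exact ⟨fun h => this (Or.inl h), fun h => this (Or.inr h)⟩
          have hlt := indep_lt hind _ hins
          rw [Finset.card_insert_of_notMem
            (fun h => hvS (Finset.mem_of_mem_filter _ h))] at hlt
          omega
        have hXi : ((nonN E v).filter (fun u => E u s)).card ≤ 2 := by
          have hins : ∀ z ∈ insert v ((nonN E v).filter (fun u => E u s)),
              ∀ w ∈ insert v ((nonN E v).filter (fun u => E u s)), ¬ E z w := by
            apply indep_insert_of _ _
              (in_indep hno s _ (fun x hx => (Finset.mem_filter.mp hx).2)) _
              (irrefl hor _)
            intro x hx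
            have := (hSmem x (Finset.mem_of_mem_filter _ hx)).2
            exact ⟨fun h => this (Or.inl h), fun h => this (Or.inr h)⟩
          have hlt := indep_lt hind _ hins
          rw [Finset.card_insert_of_notMem
            (fun h => hvS (Finset.mem_of_mem_filter _ h))] at hlt
          omega
        have hsub : (nonN E v).filter (fun u => adj E s u) ⊆
            ((nonN E v).filter (fun u => E s u)) ∪ ((nonN E v).filter (fun u => E u s)) := by
          intro u hu
          rw [Finset.mem_filter] at hu
          rcases hu.2 with h | h
          · exact Finset.mem_union_left _ (Finset.mem_filter.mpr ⟨hu.1, h⟩)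
          · exact Finset.mem_union_right _ (Finset.mem_filter.mpr ⟨hu.1, h⟩)
        calc dS E (nonN E v) s ≤ _ := Finset.card_le_card hsub
          _ ≤ _ := Finset.card_union_le _ _
          _ ≤ 4 := by omega
      have hone : (nonN E v).filter
          (fun s => ((outN E v).filter (fun u => adj E s u)).card = 1) = nonN E v := by
        apply Finset.filter_true_of_mem
        intro s hs
        have h1 := hdecv s hs
        have h2 := haN1 s hs
        have h3 := hbN1 s hs
        have h4 := hsNup s hs
        have h5 := hsNlow s hs
        have hF2 : F (0+2) = 3 := rfl
        rw [hF2] at h5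
        omega
      have hQb := Qu_bound hor hno hind (outN E v) (nonN E v)
        (out_indep hno v _ hAmem) hSA (by rw [hA])
      rw [hone, hSc] at hQb
      rw [hA] at hQb
      omega
    | 1, hc, hglob, hA, hB, hSc, hdeg2, hdecv, haN1, hbN1, hsNlow =>
      -- k = 5
      have hsn5 : ∀ s ∈ nonN E v, 5 ≤ dS E (nonN E v) s := by
        intro s hs
        have h5 := hsNlow s hs
        have hF3 : F (1+2) = 8 := rfl
        rw [hF3, hSc] at h5
        omega
      have habs : ∀ s ∈ nonN E v,
          ((outN E v).filter (fun u => adj E s u)).card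
          + ((inN E v).filter (fun u => adj E s u)).card ≤ 3 := by
        intro s hs
        have h1 := hdecv s hs
        have h2 := hsn5 s hs
        omega
      set TwoA := (nonN E v).filter
        (fun s => 2 ≤ ((outN E v).filter (fun u => adj E s u)).card) with hTwoA
      set TwoB := (nonN E v).filter
        (fun s => 2 ≤ ((inN E v).filter (fun u => adj E s u)).card) with hTwoB
      have hcover : ∀ C : Finset V, (∀ s ∈ nonN E v,
            1 ≤ (C.filter (fun u => adj E s u)).card) →
          nonN E v ⊆ ((nonN E v).filter
            (fun s => (C.filter (fun u => adj E s u)).card = 1)) ∪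
            ((nonN E v).filter (fun s => 2 ≤ (C.filter (fun u => adj E s u)).card)) := by
        intro C hC s hs
        have := hC s hs
        rw [Finset.mem_union, Finset.mem_filter, Finset.mem_filter]
        by_cases h : (C.filter (fun u => adj E s u)).card = 1
        · exact Or.inl ⟨hs, h⟩
        · exact Or.inr ⟨hs, by omega⟩
      have hQA := Qu_bound hor hno hind (outN E v) (nonN E v)
        (out_indep hno v _ hAmem) hSA (by rw [hA])
      have hQB := Qu_bound hor hno hind (inN E v) (nonN E v)
        (in_indep hno v _ hBmem) hSB (by rw [hB])
      have hTwoAc : 6 ≤ TwoA.card := by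
        have hsub := hcover (outN E v) haN1
        have hle := Finset.card_le_card hsub
        rw [← hTwoA] at hle
        have hun := Finset.card_union_le ((nonN E v).filter
            (fun s => ((outN E v).filter (fun u => adj E s u)).card = 1)) TwoA
        rw [hA] at hQA
        rw [hSc] at hle
        omega
      have hTwoBc : 6 ≤ TwoB.card := by
        have hsub := hcover (inN E v) hbN1
        have hle := Finset.card_le_card hsub
        rw [← hTwoB] at hle
        have hun := Finset.card_union_le ((nonN E v).filter
            (fun s => ((inN E v).filter (fun u => adj E s u)).card = 1)) TwoB
        rw [hB] at hQB
        rw [hSc] at hle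
        omega
      have hdisjT : Disjoint TwoA TwoB := by
        rw [Finset.disjoint_left]
        intro s hsA hsB
        rw [hTwoA, Finset.mem_filter] at hsA
        rw [hTwoB, Finset.mem_filter] at hsB
        have := habs s hsA.1
        omega
      have hD5 : TwoA ∪ TwoB ⊆ (nonN E v).filter
          (fun x => dS E (nonN E v) x = 5) := by
        intro s hs
        rcases Finset.mem_union.mp hs with hs' | hs'
        · rw [hTwoA, Finset.mem_filter] at hs'
          rw [Finset.mem_filter]
          refine ⟨hs'.1, ?_⟩
          have h1 := hdecv s hs'.1
          have h2 := hbN1 s hs'.1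
          have h3 := hsn5 s hs'.1
          omega
        · rw [hTwoB, Finset.mem_filter] at hs'
          rw [Finset.mem_filter]
          refine ⟨hs'.1, ?_⟩
          have h1 := hdecv s hs'.1
          have h2 := haN1 s hs'.1
          have h3 := hsn5 s hs'.1
          omega
      have hD5card : 12 ≤ ((nonN E v).filter
          (fun x => dS E (nonN E v) x = 5)).card := by
        have h1 := Finset.card_le_card hD5
        rw [Finset.card_union_of_disjoint hdisjT] at h1
        omega
      have h4T : ∀ T ⊆ nonN E v, (∀ x ∈ T, ∀ y ∈ T, ¬ E x y) → T.card < 4 := by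
        intro T hT hTind
        have hins : ∀ z ∈ insert v T, ∀ w ∈ insert v T, ¬ E z w := by
          apply indep_insert_of _ _ hTind _ (irrefl hor _)
          intro x hx
          have := (hSmem x (hT hx)).2
          exact ⟨fun h => this (Or.inl h), fun h => this (Or.inr h)⟩
        have hlt := indep_lt hind _ hins
        rw [Finset.card_insert_of_notMem (fun h => hvS (hT h))] at hlt
        omega
      have hcore := deg5_core hor hno (nonN E v) (by rw [hSc]) h4T
      omega
    | (m+2), hc, hglob, hA, hB, hSc, hdeg2, hdecv, haN1, hbN1, hsNlow =>
      -- k ≥ 6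
      set n := m + 2 with hn
      have habs : ∀ s ∈ nonN E v,
          ((outN E v).filter (fun u => adj E s u)).card
          + ((inN E v).filter (fun u => adj E s u)).card ≤ 3 := by
        intro s hs
        have h1 := hdecv s hs
        have h5 := hsNlow s hs
        have hF : F (n+2) = (n+2)*(n+1)+2 := rfl
        rw [hF, hSc] at h5
        have hrel : (n+3)*(n+2) = (n+2)*(n+1) + 2*n + 4 := by ring
        set p := (n+3)*(n+2) with hp
        set q := (n+2)*(n+1) with hq
        omega
      set TwoA := (nonN E v).filter
        (fun s => 2 ≤ ((outN E v).filter (fun u => adj E s u)).card) with hTwoA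
      set TwoB := (nonN E v).filter
        (fun s => 2 ≤ ((inN E v).filter (fun u => adj E s u)).card) with hTwoB
      have hcover : ∀ C : Finset V, (∀ s ∈ nonN E v,
            1 ≤ (C.filter (fun u => adj E s u)).card) →
          nonN E v ⊆ ((nonN E v).filter
            (fun s => (C.filter (fun u => adj E s u)).card = 1)) ∪
            ((nonN E v).filter (fun s => 2 ≤ (C.filter (fun u => adj E s u)).card)) := by
        intro C hC s hs
        have := hC s hs
        rw [Finset.mem_union, Finset.mem_filter, Finset.mem_filter]
        by_cases h : (C.filter (fun u => adj E s u)).card = 1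
        · exact Or.inl ⟨hs, h⟩
        · exact Or.inr ⟨hs, by omega⟩
      have hQA := Qu_bound hor hno hind (outN E v) (nonN E v)
        (out_indep hno v _ hAmem) hSA (by rw [hA])
      have hQB := Qu_bound hor hno hind (inN E v) (nonN E v)
        (in_indep hno v _ hBmem) hSB (by rw [hB])
      have hTwoAc : (nonN E v).card ≤ 2*(n+3) + TwoA.card := by
        have hsub := hcover (outN E v) haN1
        have hle := Finset.card_le_card hsub
        rw [← hTwoA] at hle
        have hun := Finset.card_union_le ((nonN E v).filter
            (fun s => ((outN E v).filter (fun u => adj E s u)).card = 1)) TwoA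
        rw [hA] at hQA
        omega
      have hTwoBc : (nonN E v).card ≤ 2*(n+3) + TwoB.card := by
        have hsub := hcover (inN E v) hbN1
        have hle := Finset.card_le_card hsub
        rw [← hTwoB] at hle
        have hun := Finset.card_union_le ((nonN E v).filter
            (fun s => ((inN E v).filter (fun u => adj E s u)).card = 1)) TwoB
        rw [hB] at hQB
        omega
      have hdisjT : Disjoint TwoA TwoB := by
        rw [Finset.disjoint_left]
        intro s hsA hsB
        rw [hTwoA, Finset.mem_filter] at hsA
        rw [hTwoB, Finset.mem_filter] at hsB
        have := habs s hsA.1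
        omega
      have hsumT : TwoA.card + TwoB.card ≤ (nonN E v).card := by
        rw [← Finset.card_union_of_disjoint hdisjT]
        apply Finset.card_le_card
        intro s hs
        rcases Finset.mem_union.mp hs with hs' | hs'
        · exact Finset.mem_of_mem_filter _ hs'
        · exact Finset.mem_of_mem_filter _ hs'
      have hrel : (n+3)*(n+2) = n*n + 5*n + 6 := by ring
      have h2n : 2 ≤ n := by omega
      have hnn : 2*n ≤ n*n := Nat.mul_le_mul_right n h2n
      rw [hrel] at hSc
      omega

end S13
namespace S13
variable {V : Type*} [Fintype V] [DecidableEq V] {E : V → V → Prop} [DecidableRel E]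

lemma arcs_fst : (Finset.univ.filter (fun p : V × V => E p.1 p.2)).card
    = ∑ v : V, (outN E v).card := by
  rw [Finset.card_eq_sum_card_fiberwise
    (f := fun p : V × V => p.1) (t := Finset.univ) (fun p _ => Finset.mem_univ p.1)]
  apply Finset.sum_congr rfl
  intro v _
  have himg : (Finset.univ.filter (fun p : V × V => E p.1 p.2)).filter
      (fun p => p.1 = v) = (outN E v).image (fun u => (v, u)) := by
    ext p
    simp only [Finset.mem_filter, Finset.mem_image, Finset.mem_univ, true_and, outN]
    constructor
    · rintro ⟨hE, h1⟩
      exact ⟨p.2, by rw [← h1]; exact hE, by rw [← h1]⟩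
    · rintro ⟨u, hu, rfl⟩
      exact ⟨hu, rfl⟩
  rw [himg, Finset.card_image_of_injective _ (fun a b h => (Prod.mk.injEq _ _ _ _).mp h |>.2)]

lemma arcs_snd : (Finset.univ.filter (fun p : V × V => E p.1 p.2)).card
    = ∑ v : V, (inN E v).card := by
  rw [Finset.card_eq_sum_card_fiberwise
    (f := fun p : V × V => p.2) (t := Finset.univ) (fun p _ => Finset.mem_univ p.2)]
  apply Finset.sum_congr rfl
  intro v _
  have himg : (Finset.univ.filter (fun p : V × V => E p.1 p.2)).filter
      (fun p => p.2 = v) = (inN E v).image (fun u => (u, v)) := by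
    ext p
    simp only [Finset.mem_filter, Finset.mem_image, Finset.mem_univ, true_and, inN]
    constructor
    · rintro ⟨hE, h1⟩
      exact ⟨p.1, by rw [← h1]; exact hE, by rw [← h1]⟩
    · rintro ⟨u, hu, rfl⟩
      exact ⟨hu, rfl⟩
  rw [himg, Finset.card_image_of_injective _ (fun a b h => (Prod.mk.injEq _ _ _ _).mp h |>.1)]

end S13

theorem stmt13 {V : Type*} [Fintype V] (E : V → V → Prop) (m : ℕ)
    (hm : 3 ≤ m)
    (hcard : Fintype.card V = m * m - m + 2)
    (hor : IsOriented E)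
    (hIm : ¬ HasIndep E m)
    (hL3 : ¬ ∃ a b c : V, E a b ∧ E b c ∧ E a c) :
    (m * m - m + 2) * (2 * m - 3) / 2 ≤ Nat.card {p : V × V // E p.1 p.2} := by
  classical
  open S13 in
  obtain ⟨j, rfl⟩ : ∃ j, m = j + 3 := ⟨m - 3, by omega⟩
  -- minimum degree bound
  have hdegv : ∀ v : V, 2*(j+3)-3 ≤ S13.deg E v := by
    intro v
    have h1 := S13.partition hor v
    have hsv : (S13.nonN E v).card ≤ S13.F (j+2) := by
      have hni := S13.ind_noIndep hIm {v} (S13.nonN E v) (by simp) ?_ ?_ ?_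
      · have hc1 : (j+3) - ({v} : Finset V).card = j + 2 := by
          rw [Finset.card_singleton]
          omega
        rw [hc1] at hni
        have := S13.key (j+2) (S13.indE (S13.nonN E v) E)
          (S13.ind_oriented _ hor) (S13.ind_notri _ hL3) hni
        rwa [Fintype.card_coe] at this
      · intro x hx y hy
        rw [Finset.mem_singleton] at hx hy
        subst hx; subst hy
        exact S13.irrefl hor _
      · intro x hx w hw
        rw [Finset.mem_singleton] at hx
        subst hx
        have := (Finset.mem_filter.mp hw).2.2
        exact ⟨fun h => this (Or.inl h), fun h => this (Or.inr h)⟩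
      · rw [Finset.disjoint_left]
        intro a ha hb
        rw [Finset.mem_singleton] at ha
        subst ha
        exact (Finset.mem_filter.mp hb).2.1 rfl
    have hF : S13.F (j+2) ≤ (j+2)*(j+1)+2 := by
      match j with
      | 0 => decide
      | (i+1) => exact le_refl _
    have hrelA : (j+3)*(j+3) = j*j + 6*j + 9 := by ring
    have hrelB : (j+2)*(j+1) = j*j + 3*j + 2 := by ring
    omega
  -- handshake
  have hnat : Nat.card {p : V × V // E p.1 p.2}
      = (Finset.univ.filter (fun p : V × V => E p.1 p.2)).card := by
    rw [Nat.card_eq_fintype_card, Fintype.card_subtype]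
  have hsum : Fintype.card V * (2*(j+3)-3) ≤ ∑ v : V, S13.deg E v := by
    calc Fintype.card V * (2*(j+3)-3) = ∑ _v : V, (2*(j+3)-3) := by
          rw [Finset.sum_const, Finset.card_univ, smul_eq_mul]
      _ ≤ ∑ v : V, S13.deg E v := Finset.sum_le_sum (fun v _ => hdegv v)
  have hdsum : ∑ v : V, S13.deg E v =
      (∑ v : V, (S13.outN E v).card) + (∑ v : V, (S13.inN E v).card) := by
    rw [← Finset.sum_add_distrib]
    apply Finset.sum_congr rfl
    intro v _
    exact S13.deg_eq hor v
  have harcs : Fintype.card V * (2*(j+3)-3) ≤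
      2 * (Finset.univ.filter (fun p : V × V => E p.1 p.2)).card := by
    have hstep : Fintype.card V * (2*(j+3)-3) ≤
        (Finset.univ.filter (fun p : V × V => E p.1 p.2)).card
        + (Finset.univ.filter (fun p : V × V => E p.1 p.2)).card := by
      calc Fintype.card V * (2*(j+3)-3) ≤ ∑ v : V, S13.deg E v := hsum
        _ = _ := hdsum
        _ = _ := by rw [← S13.arcs_fst, ← S13.arcs_snd]
    omega
  rw [hnat]
  rw [hcard] at harcs
  omega
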